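/- Let n ≥ 1 and k ≥ 1 be integers and let L, t₁,…,tₙ be complex numbers. Then (1/(2πi)) ∮_{|w|=1} e^{Lw + t₁/w + t₂/w² + ⋯ + tₙ/wⁿ} / w^{2k} dw = Σ_{m₂,…,mₙ ≥ 0} ( ∏_{j=2}^{n} t_j^{m_j}/m_j! ) · L^{ν} · Σ_{r≥0} (L·t₁)^{r} / ( r!·(ν+r)! ), where ν = ν(m₂,…,mₙ) = Σ_{j=2}^{n} j·m_j + 2k − 1 and the right-hand side converges absolutely; when L and t₁ are positive reals, the factor L^{ν}·Σ_{r≥0}(L·t₁)^{r}/(r!(ν+r)!) equals (L/t₁)^{ν/2}·I_ν(2√(L·t₁)). -/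

import Mathlib

open Finset

noncomputable section

/-- The modified Bessel function of the first kind of integer order,
`I_m(x) = (x/2)^m Σ_{j≥0} (x/2)^{2j}/(j!(m+j)!)`. -/
def besselI (m : ℕ) (x : ℝ) : ℝ :=
  (x / 2) ^ m * ∑' j : ℕ, (x / 2) ^ (2 * j) / (j.factorial * (m + j).factorial)

/-- The index `ν(m₂,…,mₙ) = Σ_{j=2}^n j·m_j + 2k − 1` (the tuple `(m₂,…,mₙ)` is realised
as `m : Fin nn → ℕ`, where `n = nn + 1` and `m_(j+2) = m j`). -/
def nuIdx (k nn : ℕ) (m : Fin nn → ℕ) : ℕ := (∑ j : Fin nn, ((j : ℕ) + 2) * m j) + 2 * k - 1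

lemma cexp_tsum (z : ℂ) : Complex.exp z = ∑' n : ℕ, z ^ n / (n.factorial : ℂ) := by
  rw [Complex.exp_eq_exp_ℂ, NormedSpace.exp_eq_tsum_div]

lemma summable_norm_pow_div_factorial (z : ℂ) :
    Summable fun n : ℕ => ‖z ^ n / (n.factorial : ℂ)‖ := by
  simpa [norm_div, norm_pow] using Real.summable_pow_div_factorial ‖z‖

lemma pi_expansion : ∀ (M : ℕ) (c : Fin M → ℂ),
    (Summable fun m : Fin M → ℕ => ‖∏ j, c j ^ m j / ((m j).factorial : ℂ)‖) ∧
    Complex.exp (∑ j, c j) = ∑' m : Fin M → ℕ, ∏ j, c j ^ m j / ((m j).factorial : ℂ) := by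
  intro M
  induction M with
  | zero =>
    intro c
    constructor
    · exact Summable.of_finite
    · simp only [Finset.univ_eq_empty, Finset.sum_empty, Finset.prod_empty, Complex.exp_zero]
      rw [tsum_eq_single (fun i => i.elim0)]
      intro b hb
      exact absurd (Subsingleton.elim _ _) hb
  | succ M ih =>
    intro c
    obtain ⟨hs, he⟩ := ih fun j => c j.succ
    have h0 := summable_norm_pow_div_factorial (c 0)
    have hee : ∀ p : ℕ × (Fin M → ℕ),
        (Fin.consEquiv fun _ : Fin (M + 1) => ℕ) p = Fin.cons p.1 p.2 := fun _ => rfl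
    have key : ∀ p : ℕ × (Fin M → ℕ),
        (c 0 ^ p.1 / (p.1.factorial : ℂ)) * ∏ j, c j.succ ^ p.2 j / ((p.2 j).factorial : ℂ) =
        ∏ j, c j ^ (Fin.cons (α := fun _ => ℕ) p.1 p.2 j) / ((Fin.cons (α := fun _ => ℕ) p.1 p.2 j).factorial : ℂ) := by
      intro p
      rw [Fin.prod_univ_succ]
      simp [Fin.cons_zero, Fin.cons_succ]
    have hpair : Summable fun p : ℕ × (Fin M → ℕ) =>
        ‖(c 0 ^ p.1 / (p.1.factorial : ℂ)) *
          ∏ j, c j.succ ^ p.2 j / ((p.2 j).factorial : ℂ)‖ :=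
      Summable.mul_norm (f := fun n : ℕ => c 0 ^ n / (n.factorial : ℂ))
        (g := fun m : Fin M → ℕ => ∏ j, c j.succ ^ m j / ((m j).factorial : ℂ)) h0 hs
    constructor
    · rw [← Equiv.summable_iff (Fin.consEquiv fun _ : Fin (M + 1) => ℕ)]
      refine hpair.congr fun p => ?_
      simp only [Function.comp_apply, hee p, key p]
    · rw [Fin.sum_univ_succ, Complex.exp_add, he, cexp_tsum,
        tsum_mul_tsum_of_summable_norm h0 hs,
        ← Equiv.tsum_eq (Fin.consEquiv fun _ : Fin (M + 1) => ℕ)]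
      refine tsum_congr fun p => ?_
      rw [hee p, ← key p]

lemma rexp_tsum (x : ℝ) : Real.exp x = ∑' n : ℕ, x ^ n / (n.factorial : ℝ) := by
  rw [Real.exp_eq_exp_ℝ, NormedSpace.exp_eq_tsum_div]

lemma summable_inner (z : ℂ) (ν : ℕ) :
    Summable fun r : ℕ => ‖z ^ r / ((r.factorial : ℂ) * ((ν + r).factorial : ℂ))‖ := by
  refine Summable.of_nonneg_of_le (fun r => norm_nonneg _) (fun r => ?_)
    (Real.summable_pow_div_factorial ‖z‖)
  rw [norm_div, norm_pow, norm_mul, Complex.norm_natCast, Complex.norm_natCast]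
  apply div_le_div_of_nonneg_left (by positivity) (by positivity)
  exact le_mul_of_one_le_right (by positivity)
    (by exact_mod_cast (ν + r).factorial_pos)

lemma inner_bound (z L : ℂ) (ν : ℕ) :
    ‖L ^ ν * ∑' r : ℕ, z ^ r / ((r.factorial : ℂ) * ((ν + r).factorial : ℂ))‖ ≤
      Real.exp ‖L‖ * Real.exp ‖z‖ := by
  have hf : ∀ r : ℕ, ‖z ^ r / ((r.factorial : ℂ) * ((ν + r).factorial : ℂ))‖ ≤
      (1 / (ν.factorial : ℝ)) * (‖z‖ ^ r / (r.factorial : ℝ)) := by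
    intro r
    rw [norm_div, norm_pow, norm_mul, Complex.norm_natCast, Complex.norm_natCast]
    rw [div_mul_eq_mul_div, one_mul, div_div]
    apply div_le_div_of_nonneg_left (by positivity) (by positivity)
    · exact_mod_cast Nat.mul_le_mul_left r.factorial
        (Nat.factorial_le (Nat.le_add_right ν r))
  have hsum2 : Summable fun r : ℕ => (1 / (ν.factorial : ℝ)) * (‖z‖ ^ r / (r.factorial : ℝ)) :=
    (Real.summable_pow_div_factorial ‖z‖).mul_left _
  calc ‖L ^ ν * ∑' r : ℕ, z ^ r / ((r.factorial : ℂ) * ((ν + r).factorial : ℂ))‖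
      = ‖L‖ ^ ν * ‖∑' r : ℕ, z ^ r / ((r.factorial : ℂ) * ((ν + r).factorial : ℂ))‖ := by
        rw [norm_mul, norm_pow]
    _ ≤ ‖L‖ ^ ν * ((1 / (ν.factorial : ℝ)) * Real.exp ‖z‖) := by
        refine mul_le_mul_of_nonneg_left ?_ (by positivity)
        refine (norm_tsum_le_tsum_norm (summable_inner z ν)).trans ?_
        refine (Summable.tsum_le_tsum hf (summable_inner z ν) hsum2).trans_eq ?_
        rw [tsum_mul_left, rexp_tsum]
    _ ≤ Real.exp ‖L‖ * Real.exp ‖z‖ := by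
        rw [show ‖L‖ ^ ν * ((1 / (ν.factorial : ℝ)) * Real.exp ‖z‖)
            = (‖L‖ ^ ν / (ν.factorial : ℝ)) * Real.exp ‖z‖ from by ring]
        refine mul_le_mul_of_nonneg_right ?_ (Real.exp_pos _).le
        refine (Summable.le_tsum (Real.summable_pow_div_factorial ‖L‖) ν
          (fun j _ => by positivity)).trans_eq ?_
        rw [rexp_tsum]

lemma clause3 (ν : ℕ) (Lr t1 : ℝ) (hL : 0 < Lr) (ht : 0 < t1) :
    Lr ^ ν * ∑' r : ℕ, (Lr * t1) ^ r / ((r.factorial : ℝ) * ((ν + r).factorial : ℝ)) =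
    Real.rpow (Lr / t1) ((ν : ℝ) / 2) * besselI ν (2 * Real.sqrt (Lr * t1)) := by
  unfold besselI
  have hx : (0 : ℝ) < Lr * t1 := mul_pos hL ht
  have h1 : 2 * Real.sqrt (Lr * t1) / 2 = Real.sqrt (Lr * t1) := by ring
  have h2 : ∀ j : ℕ, Real.sqrt (Lr * t1) ^ (2 * j) = (Lr * t1) ^ j := fun j => by
    rw [pow_mul, Real.sq_sqrt hx.le]
  rw [h1]
  have h3 : (∑' j : ℕ, Real.sqrt (Lr * t1) ^ (2 * j) / ((j.factorial : ℝ) * ((ν + j).factorial : ℝ)))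
      = ∑' r : ℕ, (Lr * t1) ^ r / ((r.factorial : ℝ) * ((ν + r).factorial : ℝ)) :=
    tsum_congr fun j => by rw [h2]
  rw [show ∀ a b : ℝ, Real.rpow (Lr / t1) ((ν : ℝ) / 2) * (a * b) =
      (Real.rpow (Lr / t1) ((ν : ℝ) / 2) * a) * b from fun a b => by ring]
  rw [h3]
  congr 1
  -- Lr ^ ν = (Lr/t1)^(ν/2) * sqrt(Lr*t1)^ν
  have hsq : Real.sqrt (Lr * t1) ^ ν = (Lr * t1) ^ ((ν : ℝ) / 2) := by
    rw [Real.sqrt_eq_rpow, ← Real.rpow_natCast ((Lr * t1) ^ ((1:ℝ)/2)) ν,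
      ← Real.rpow_mul hx.le]
    ring_nf
  rw [hsq]
  show Lr ^ ν = (Lr / t1) ^ ((ν : ℝ) / 2) * (Lr * t1) ^ ((ν : ℝ) / 2)
  rw [← Real.mul_rpow (div_pos hL ht).le hx.le,
    show (Lr / t1) * (Lr * t1) = Lr ^ 2 from by field_simp,
    ← Real.rpow_natCast Lr 2, ← Real.rpow_mul hL.le,
    show (2 : ℕ) * ((ν : ℝ) / 2) = (ν : ℝ) from by push_cast; ring, Real.rpow_natCast]

def coeffF (nn : ℕ) (L : ℂ) (t : Fin (nn + 1) → ℂ) (m : Fin (nn + 2) → ℕ) : ℂ :=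
  ∏ j, (Fin.cons (α := fun _ => ℂ) L t) j ^ m j / ((m j).factorial : ℂ)

def expB (nn : ℕ) (m : Fin (nn + 2) → ℕ) : ℕ := ∑ j : Fin (nn + 1), ((j : ℕ) + 1) * m j.succ

def expD (nn k : ℕ) (m : Fin (nn + 2) → ℕ) : ℤ := (m 0 : ℤ) - expB nn m - 2 * k

lemma pointwise (nn k : ℕ) (L : ℂ) (t : Fin (nn + 1) → ℂ) {w : ℂ} (hw : w ≠ 0) :
    Complex.exp (L * w + ∑ j : Fin (nn + 1), t j / w ^ ((j : ℕ) + 1)) / w ^ (2 * k) =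
    ∑' m : Fin (nn + 2) → ℕ, coeffF nn L t m * w ^ expD nn k m := by
  have hsum : ∑ j : Fin (nn + 2),
        (Fin.cons (α := fun _ => ℂ) (L * w) (fun j => t j / w ^ ((j : ℕ) + 1))) j
      = L * w + ∑ j : Fin (nn + 1), t j / w ^ ((j : ℕ) + 1) := by
    rw [Fin.sum_univ_succ]
    simp [Fin.cons_zero, Fin.cons_succ]
  rw [← hsum, (pi_expansion _ _).2, div_eq_mul_inv, ← tsum_mul_right]
  refine tsum_congr fun m => ?_
  rw [Fin.prod_univ_succ, Fin.cons_zero]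
  simp only [Fin.cons_succ]
  have hterm : ∀ j : Fin (nn + 1),
      (t j / w ^ ((j : ℕ) + 1)) ^ m j.succ / ((m j.succ).factorial : ℂ)
      = t j ^ m j.succ / ((m j.succ).factorial : ℂ) * (w ^ (((j : ℕ) + 1) * m j.succ))⁻¹ := by
    intro j; rw [div_pow, pow_mul]; ring
  rw [Finset.prod_congr rfl (fun j _ => hterm j), Finset.prod_mul_distrib,
    Finset.prod_inv_distrib, Finset.prod_pow_eq_pow_sum]
  have hz : w ^ expD nn k m = w ^ (m 0) * (w ^ expB nn m)⁻¹ * (w ^ (2 * k))⁻¹ := by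
    rw [expD, sub_sub, show ((2 : ℤ) * (k : ℤ)) = ((2 * k : ℕ) : ℤ) from by push_cast; ring,
      zpow_sub₀ hw, zpow_add₀ hw, zpow_natCast, zpow_natCast, zpow_natCast]
    rw [div_eq_mul_inv, mul_inv]; ring
  have hBdef : expB nn m = ∑ i : Fin (nn + 1), ((i : ℕ) + 1) * m i.succ := rfl
  rw [← hBdef]
  conv_rhs => rw [coeffF, Fin.prod_univ_succ]
  simp only [Fin.cons_zero, Fin.cons_succ]
  rw [hz, mul_pow]
  ring

open MeasureTheory Real in
lemma integral_eq (nn k : ℕ) (L : ℂ) (t : Fin (nn + 1) → ℂ) :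
    circleIntegral
      (fun w : ℂ => Complex.exp (L * w + ∑ j : Fin (nn + 1), t j / w ^ ((j : ℕ) + 1)) / w ^ (2 * k))
      0 1
    = ∑' m : Fin (nn + 2) → ℕ,
        coeffF nn L t m * (if expD nn k m = -1 then (2 * (Real.pi : ℂ) * Complex.I) else 0) := by
  have hcs : Summable fun m : Fin (nn + 2) → ℕ => ‖coeffF nn L t m‖ :=
    (pi_expansion (nn + 2) (Fin.cons L t)).1
  have hne : ∀ θ : ℝ, circleMap 0 1 θ ≠ 0 := fun θ => circleMap_ne_center one_ne_zero
  have habs : ∀ θ : ℝ, ‖circleMap 0 1 θ‖ = 1 := fun θ => by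
    rw [norm_circleMap_zero]; norm_num
  -- rewrite the circle integral as interval integral of a tsum
  rw [circleIntegral]
  have hrw : (fun θ : ℝ => deriv (circleMap 0 1) θ •
      (Complex.exp (L * circleMap 0 1 θ + ∑ j : Fin (nn + 1), t j / circleMap 0 1 θ ^ ((j : ℕ) + 1))
        / circleMap 0 1 θ ^ (2 * k)))
      = fun θ : ℝ => ∑' m : Fin (nn + 2) → ℕ,
          (circleMap 0 1 θ * Complex.I) * (coeffF nn L t m * circleMap 0 1 θ ^ expD nn k m) := by
    funext θ
    rw [deriv_circleMap, pointwise nn k L t (hne θ), smul_eq_mul, tsum_mul_left]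
  rw [hrw, intervalIntegral.integral_of_le Real.two_pi_pos.le, MeasureTheory.integral_tsum]
  · refine tsum_congr fun m => ?_
    rw [← intervalIntegral.integral_of_le Real.two_pi_pos.le]
    have : (fun θ : ℝ => (circleMap 0 1 θ * Complex.I) *
        (coeffF nn L t m * circleMap 0 1 θ ^ expD nn k m))
        = fun θ : ℝ => deriv (circleMap 0 1) θ •
          (coeffF nn L t m • ((circleMap 0 1 θ - 0) ^ expD nn k m)) := by
      funext θ
      rw [deriv_circleMap, smul_eq_mul, smul_eq_mul, sub_zero]
    rw [this]
    rw [show (∫ θ in (0:ℝ)..(2*Real.pi), deriv (circleMap 0 1) θ •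
          (coeffF nn L t m • ((circleMap 0 1 θ - 0) ^ expD nn k m)))
        = circleIntegral (fun z => coeffF nn L t m • ((z - 0) ^ expD nn k m)) 0 1 from rfl]
    rw [circleIntegral.integral_smul, smul_eq_mul]
    congr 1
    by_cases hd : expD nn k m = -1
    · rw [hd, if_pos rfl]
      have : (fun z : ℂ => (z - 0) ^ (-1 : ℤ)) = fun z : ℂ => (z - 0)⁻¹ := by
        funext z; rw [zpow_neg_one]
      rw [this, circleIntegral.integral_sub_inv_of_mem_ball (Metric.mem_ball_self one_pos)]
    · rw [circleIntegral.integral_sub_zpow_of_ne hd, if_neg hd]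
  · -- measurability
    intro m
    apply Continuous.aestronglyMeasurable
    refine (((continuous_circleMap 0 1).mul continuous_const).mul (continuous_const.mul ?_))
    exact ((continuous_circleMap 0 1).zpow₀ _ fun θ => Or.inl (hne θ))
  · -- lintegral bound
    have hnorm : ∀ (m : Fin (nn + 2) → ℕ) (θ : ℝ),
        (‖(circleMap 0 1 θ * Complex.I) * (coeffF nn L t m * circleMap 0 1 θ ^ expD nn k m)‖₊
          : ENNReal) = (‖coeffF nn L t m‖₊ : ENNReal) := by
      intro m θ
      congr 1
      ext
      rw [coe_nnnorm, coe_nnnorm, norm_mul, norm_mul, norm_mul, Complex.norm_I, habs θ,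
        norm_zpow, habs θ, one_zpow]
      ring
    calc ∑' m : Fin (nn + 2) → ℕ, ∫⁻ θ in Set.Ioc 0 (2 * Real.pi),
          ‖(circleMap 0 1 θ * Complex.I) * (coeffF nn L t m * circleMap 0 1 θ ^ expD nn k m)‖₊
        = ∑' m : Fin (nn + 2) → ℕ, (‖coeffF nn L t m‖₊ : ENNReal) * ENNReal.ofReal (2 * Real.pi) := by
          refine tsum_congr fun m => ?_
          rw [show (fun θ : ℝ => ((‖(circleMap 0 1 θ * Complex.I) *
              (coeffF nn L t m * circleMap 0 1 θ ^ expD nn k m)‖₊ : ENNReal)))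
              = fun _ : ℝ => (‖coeffF nn L t m‖₊ : ENNReal) from funext fun θ => hnorm m θ]
          rw [MeasureTheory.lintegral_const, Measure.restrict_apply MeasurableSet.univ,
            Set.univ_inter, Real.volume_Ioc, sub_zero]
      _ ≠ ⊤ := by
          rw [ENNReal.tsum_mul_right]
          exact ENNReal.mul_ne_top (ENNReal.tsum_coe_ne_top_iff_summable.2
            (by rwa [← NNReal.summable_coe]))
            ENNReal.ofReal_ne_top

def tripleEquiv (nn : ℕ) : ((Fin nn → ℕ) × ℕ × ℕ) ≃ (Fin (nn + 2) → ℕ) where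
  toFun p := Fin.cons p.2.2 (Fin.cons p.2.1 p.1)
  invFun f := (fun j => f j.succ.succ, f 1, f 0)
  left_inv := by
    rintro ⟨m, r, a⟩
    refine Prod.ext ?_ (Prod.ext ?_ ?_)
    · funext j; simp [Fin.cons_succ]
    · show (Fin.cons a (Fin.cons r m) : Fin (nn + 2) → ℕ) 1 = r
      rw [← Fin.succ_zero_eq_one, Fin.cons_succ, Fin.cons_zero]
    · simp
  right_inv := by
    intro f; funext j
    refine Fin.cases rfl (fun i => ?_) j
    simp only [Fin.cons_succ]
    refine Fin.cases ?_ (fun l => ?_) i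
    · rw [Fin.cons_zero, Fin.succ_zero_eq_one]
    · rw [Fin.cons_succ]

lemma tripleEquiv_apply (nn : ℕ) (p : (Fin nn → ℕ) × ℕ × ℕ) :
    tripleEquiv nn p = Fin.cons p.2.2 (Fin.cons p.2.1 p.1) := rfl

lemma hcoeff (nn : ℕ) (L : ℂ) (t : Fin (nn + 1) → ℂ) (a r : ℕ) (m : Fin nn → ℕ) :
    coeffF nn L t (Fin.cons a (Fin.cons r m)) =
    (L ^ a / (a.factorial : ℂ)) *
      ((t 0 ^ r / (r.factorial : ℂ)) * ∏ j, t j.succ ^ m j / ((m j).factorial : ℂ)) := by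
  rw [coeffF, Fin.prod_univ_succ, Fin.prod_univ_succ]
  simp only [Fin.cons_zero, Fin.cons_succ]

lemma hcond (k nn : ℕ) (hk : 1 ≤ k) (a r : ℕ) (m : Fin nn → ℕ) :
    (expD nn k (Fin.cons a (Fin.cons r m)) = -1) ↔ a = r + nuIdx k nn m := by
  have hB : expB nn (Fin.cons a (Fin.cons r m)) = r + ∑ j : Fin nn, ((j : ℕ) + 2) * m j := by
    rw [expB, Fin.sum_univ_succ]
    simp only [Fin.cons_succ, Fin.cons_zero, Fin.val_zero, Fin.val_succ]
    rw [zero_add, one_mul]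
  rw [expD, hB, Fin.cons_zero, nuIdx]
  generalize (∑ j : Fin nn, ((j : ℕ) + 2) * m j) = S
  constructor <;> intro h <;> omega

set_option maxHeartbeats 1000000 in
lemma final_reindex (k nn : ℕ) (hk : 1 ≤ k) (L : ℂ) (t : Fin (nn + 1) → ℂ) :
    (∑' m : Fin (nn + 2) → ℕ, coeffF nn L t m * (if expD nn k m = -1 then (1 : ℂ) else 0))
    = ∑' m : Fin nn → ℕ,
        (∏ j, t j.succ ^ m j / ((m j).factorial : ℂ)) * L ^ nuIdx k nn m *
          ∑' r : ℕ, (L * t 0) ^ r /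
            ((r.factorial : ℂ) * ((nuIdx k nn m + r).factorial : ℂ)) := by
  have hcs := (pi_expansion (nn + 2) (Fin.cons L t)).1
  have hF : Summable (fun m : Fin (nn + 2) → ℕ =>
      coeffF nn L t m * (if expD nn k m = -1 then (1 : ℂ) else 0)) := by
    apply Summable.of_norm
    refine Summable.of_nonneg_of_le (fun _ => norm_nonneg _) (fun m => ?_) hcs
    rw [norm_mul]
    have h1 : ‖(if expD nn k m = -1 then (1 : ℂ) else 0)‖ ≤ 1 := by split <;> simp
    exact mul_le_of_le_one_right (norm_nonneg _) h1
  have step := Equiv.tsum_eq (tripleEquiv nn)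
    (fun m => coeffF nn L t m * (if expD nn k m = -1 then (1 : ℂ) else 0))
  rw [← step]
  have hG' := (Equiv.summable_iff (tripleEquiv nn)
    (f := fun m => coeffF nn L t m * (if expD nn k m = -1 then (1 : ℂ) else 0))).2 hF
  have hG : Summable (fun p : (Fin nn → ℕ) × ℕ × ℕ =>
      coeffF nn L t (tripleEquiv nn p) * (if expD nn k (tripleEquiv nn p) = -1 then (1:ℂ) else 0)) :=
    hG'.congr fun p => rfl
  rw [Summable.tsum_prod' hG fun m => hG.prod_factor m]
  refine tsum_congr fun m => ?_
  rw [Summable.tsum_prod' (hG.prod_factor m) fun r => (hG.prod_factor m).prod_factor r]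
  have hinner : ∀ r : ℕ, (∑' a : ℕ,
      coeffF nn L t (tripleEquiv nn (m, r, a)) *
        (if expD nn k (tripleEquiv nn (m, r, a)) = -1 then (1:ℂ) else 0))
      = (∏ j, t j.succ ^ m j / ((m j).factorial : ℂ)) *
        (L ^ nuIdx k nn m * ((L * t 0) ^ r /
          ((r.factorial : ℂ) * ((nuIdx k nn m + r).factorial : ℂ)))) := by
    intro r
    rw [tsum_eq_single (r + nuIdx k nn m) ?_]
    · rw [tripleEquiv_apply, hcoeff, if_pos ((hcond k nn hk _ r m).2 rfl), mul_one]
      rw [add_comm r (nuIdx k nn m), pow_add, mul_pow]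
      ring
    · intro a ha
      rw [tripleEquiv_apply]
      rw [if_neg (fun h => ha ((hcond k nn hk a r m).1 h)), mul_zero]
  rw [tsum_congr hinner, tsum_mul_left, tsum_mul_left, mul_assoc]

/-- **Lemma (the contour integral `(1/2πi)∮_{|w|=1} e^{Lw+t₁/w+⋯+tₙ/wⁿ} w^{−2k} dw`).**
Here `n = nn + 1 ≥ 1` and `t : Fin (nn+1) → ℂ` encodes `(t₁,…,tₙ)` (so `t₁ = t 0` and
`t_(j+2) = t j.succ` for `j : Fin nn`).  The first clause asserts the absolute convergence
of the right-hand side, the second the stated identity, and the third that for positive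
real `L, t₁` the factor `L^ν Σ_r (Lt₁)^r/(r!(ν+r)!)` equals `(L/t₁)^{ν/2} I_ν(2√(Lt₁))`. -/
theorem contour_integral_bessel (k nn : ℕ) (hk : 1 ≤ k) (L : ℂ) (t : Fin (nn + 1) → ℂ) :
    (Summable fun m : Fin nn → ℕ =>
      ‖(∏ j, t j.succ ^ m j / ((m j).factorial : ℂ)) * L ^ nuIdx k nn m *
        ∑' r : ℕ, (L * t 0) ^ r / ((r.factorial : ℂ) * ((nuIdx k nn m + r).factorial : ℂ))‖) ∧
    ((2 * (Real.pi : ℂ) * Complex.I)⁻¹ *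
        circleIntegral
          (fun w : ℂ =>
            Complex.exp (L * w + ∑ j : Fin (nn + 1), t j / w ^ ((j : ℕ) + 1)) / w ^ (2 * k))
          0 1 =
      ∑' m : Fin nn → ℕ,
        (∏ j, t j.succ ^ m j / ((m j).factorial : ℂ)) * L ^ nuIdx k nn m *
          ∑' r : ℕ, (L * t 0) ^ r / ((r.factorial : ℂ) * ((nuIdx k nn m + r).factorial : ℂ))) ∧
    (∀ (Lr t1 : ℝ), 0 < Lr → 0 < t1 → ∀ m : Fin nn → ℕ,
      Lr ^ nuIdx k nn m *
          ∑' r : ℕ, (Lr * t1) ^ r / ((r.factorial : ℝ) * ((nuIdx k nn m + r).factorial : ℝ)) =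
        Real.rpow (Lr / t1) ((nuIdx k nn m : ℝ) / 2) *
          besselI (nuIdx k nn m) (2 * Real.sqrt (Lr * t1))) := by
  refine ⟨?_, ?_, ?_⟩
  · -- summability
    refine Summable.of_nonneg_of_le (fun _ => norm_nonneg _) (fun m => ?_)
      (((pi_expansion nn fun j => t j.succ).1).mul_right
        (Real.exp ‖L‖ * Real.exp ‖L * t 0‖))
    rw [mul_assoc, norm_mul]
    exact mul_le_mul_of_nonneg_left (inner_bound (L * t 0) L (nuIdx k nn m)) (norm_nonneg _)
  · -- the contour integral identity
    rw [integral_eq nn k L t, ← tsum_mul_left]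
    have h2 : ∀ m : Fin (nn + 2) → ℕ,
        (2 * (Real.pi : ℂ) * Complex.I)⁻¹ *
          (coeffF nn L t m *
            (if expD nn k m = -1 then (2 * (Real.pi : ℂ) * Complex.I) else 0)) =
        coeffF nn L t m * (if expD nn k m = -1 then (1 : ℂ) else 0) := by
      intro m
      split
      · rw [mul_one, mul_comm (coeffF nn L t m), ← mul_assoc,
          inv_mul_cancel₀ Complex.two_pi_I_ne_zero, one_mul]
      · simp
    rw [tsum_congr h2, final_reindex k nn hk L t]
  · -- the Bessel identity
    intro Lr t1 hL ht m
    exact clause3 (nuIdx k nn m) Lr t1 hL ht
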